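/- arXiv:1809.05171 — 2 statements merged into one kernel-verified Lean document; each statement's English description precedes it below -/
import Mathlib

section
/- Let X be a finite set, let p : X → ℝ be a probability distribution on X (p(x) ≥ 0 for all x and ∑_{x∈X} p(x) = 1), let t ≥ 1 be a natural number and ε ≥ 0. Suppose there exists a probability distribution q : X → ℝ on X whose support has cardinality at most t and which satisfies ∑_{x∈X} |p(x) − q(x)| ≤ ε. Let S = {x ∈ X : p(x) > ε/t}. Then ∑_{x ∉ S} p(x) ≤ 2ε. -/
open Finset
open scoped Classical

/-- Technical sparsity lemma (Lemma 5 / Lemma from Kushilevitz–Mansour):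
if `p` is a probability distribution on a finite set `X`, `q` is a `t`-sparse probability
distribution with `∑ |p - q| ≤ ε`, and `S = {x | p x > ε / t}`, then the total mass of `p`
outside `S` is at most `2ε`. -/
theorem stmt_0 {X : Type*} [Fintype X] (p : X → ℝ)
    (hp0 : ∀ x, 0 ≤ p x) (hp1 : ∑ x, p x = 1)
    (t : ℕ) (ht : 1 ≤ t) (ε : ℝ) (hε : 0 ≤ ε)
    (hsparse : ∃ q : X → ℝ, (∀ x, 0 ≤ q x) ∧ (∑ x, q x = 1) ∧
      (Finset.univ.filter fun x => q x ≠ 0).card ≤ t ∧ (∑ x, |p x - q x| ≤ ε)) :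
    ∑ x ∈ Finset.univ.filter (fun x => ¬ (ε / t < p x)), p x ≤ 2 * ε := by
  obtain ⟨q, hq0, hq1, hqcard, hqd⟩ := hsparse
  set S := Finset.univ.filter (fun x => ¬ (ε / t < p x)) with hS
  have hsplit := Finset.sum_filter_add_sum_filter_not S (fun x => q x ≠ 0) p
  have ht' : (0:ℝ) < t := by positivity
  have h1 : ∑ x ∈ S.filter (fun x => q x ≠ 0), p x ≤ ε := by
    calc ∑ x ∈ S.filter (fun x => q x ≠ 0), p x
        ≤ ∑ _x ∈ S.filter (fun x => q x ≠ 0), (ε / t) := by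
          apply Finset.sum_le_sum
          intro x hx
          have := (Finset.mem_filter.mp (Finset.mem_filter.mp hx).1).2
          linarith [not_lt.mp this]
      _ = (S.filter (fun x => q x ≠ 0)).card * (ε / t) := by
          rw [Finset.sum_const, nsmul_eq_mul]
      _ ≤ (t : ℝ) * (ε / t) := by
          apply mul_le_mul_of_nonneg_right _ (by positivity)
          have hcard : (S.filter (fun x => q x ≠ 0)).card ≤
              (Finset.univ.filter fun x => q x ≠ 0).card := by
            apply Finset.card_le_card
            intro x hx
            simp only [Finset.mem_filter, Finset.mem_univ, true_and] at hx ⊢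
            exact hx.2
          exact_mod_cast hcard.trans hqcard
      _ = ε := by field_simp
  have h2 : ∑ x ∈ S.filter (fun x => ¬ q x ≠ 0), p x ≤ ε := by
    calc ∑ x ∈ S.filter (fun x => ¬ q x ≠ 0), p x
        = ∑ x ∈ S.filter (fun x => ¬ q x ≠ 0), |p x - q x| := by
          apply Finset.sum_congr rfl
          intro x hx
          have hq : q x = 0 := not_not.mp (Finset.mem_filter.mp hx).2
          rw [hq, sub_zero, abs_of_nonneg (hp0 x)]
      _ ≤ ∑ x, |p x - q x| := by
          apply Finset.sum_le_sum_of_subset_of_nonneg (Finset.filter_subset _ _ |>.trans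
            (Finset.filter_subset _ _))
          intro x _ _
          exact abs_nonneg _
      _ ≤ ε := hqd
  linarith
end

section
/- Let X be a finite set, let p : X → ℝ be a probability distribution on X, let t ≥ 1 be a natural number and ε ≥ 0, and suppose p is ε-approximately t-sparse. Let L ⊆ X be a proper subset of X containing every x with p(x) > ε/t. Let p̃ : X → ℝ be any function such that ∑_{x∈L} |p̃(x) − p(x)| ≤ ε and such that p̃ is constant on X ∖ L with value p̃_∘ = (1 − ∑_{x∈L} p̃(x)) / |X ∖ L|. Then ∑_{x∈X} |p̃(x) − p(x)| ≤ 6ε. -/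
open Finset
open scoped Classical

/-- if `p` is an `ε`-approximately `t`-sparse probability distribution,
`L` is a proper subset of `X` containing every `x` with `p x > ε / t`, and `p̃` agrees with
`p` on `L` up to total `ℓ1` error `ε` while being uniformly flat outside `L` with the
normalizing constant value, then `‖p̃ - p‖₁ ≤ 6 ε`. -/
theorem stmt_1 {X : Type*} [Fintype X] (p : X → ℝ)
    (hp0 : ∀ x, 0 ≤ p x) (hp1 : ∑ x, p x = 1)
    (t : ℕ) (ht : 1 ≤ t) (ε : ℝ) (hε : 0 ≤ ε)
    (hsparse : ∃ q : X → ℝ, (∀ x, 0 ≤ q x) ∧ (∑ x, q x = 1) ∧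
      (Finset.univ.filter fun x => q x ≠ 0).card ≤ t ∧ (∑ x, |p x - q x| ≤ ε))
    (L : Finset X) (hL : L ⊂ Finset.univ)
    (hcover : ∀ x, ε / t < p x → x ∈ L)
    (ptilde : X → ℝ)
    (hin : ∑ x ∈ L, |ptilde x - p x| ≤ ε)
    (hout : ∀ x ∉ L,
      ptilde x = (1 - ∑ y ∈ L, ptilde y) / ((Finset.univ \ L).card : ℝ)) :
    ∑ x, |ptilde x - p x| ≤ 6 * ε := by
  classical
  obtain ⟨q, hq0, hq1, hqcard, hqclose⟩ := hsparse
  set S : Finset X := Finset.univ \ L with hSdef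
  have httR : (0:ℝ) < (t:ℝ) := by exact_mod_cast Nat.lt_of_lt_of_le Nat.zero_lt_one ht
  have hεt : 0 ≤ ε / t := div_nonneg hε httR.le
  have hncard : 0 < S.card := by
    obtain ⟨x, -, hx⟩ := Finset.exists_of_ssubset hL
    exact Finset.card_pos.mpr ⟨x, Finset.mem_sdiff.mpr ⟨Finset.mem_univ x, hx⟩⟩
  have hpS : ∀ x ∈ S, p x ≤ ε / t := by
    intro x hx
    by_contra h
    exact (Finset.mem_sdiff.mp hx).2 (hcover x (lt_of_not_ge h))
  have hsplit : ∀ f : X → ℝ, ∑ x, f x = ∑ x ∈ L, f x + ∑ x ∈ S, f x := by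
    intro f
    rw [hSdef, Finset.sum_sdiff_eq_sub (Finset.subset_univ L)]
    ring
  -- ∑_S p ≤ 2ε
  have hSp : ∑ x ∈ S, p x ≤ 2 * ε := by
    have hfe : ∑ x ∈ S, p x
        = ∑ x ∈ S.filter (fun x => q x = 0), p x
          + ∑ x ∈ S.filter (fun x => ¬ q x = 0), p x :=
      (Finset.sum_filter_add_sum_filter_not S _ p).symm
    have h1 : ∑ x ∈ S.filter (fun x => q x = 0), p x ≤ ε := by
      calc ∑ x ∈ S.filter (fun x => q x = 0), p x
          = ∑ x ∈ S.filter (fun x => q x = 0), |p x - q x| := by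
            apply Finset.sum_congr rfl
            intro x hx
            rw [(Finset.mem_filter.mp hx).2, sub_zero, abs_of_nonneg (hp0 x)]
        _ ≤ ∑ x, |p x - q x| := by
            apply Finset.sum_le_sum_of_subset_of_nonneg (Finset.subset_univ _)
            intro x _ _; exact abs_nonneg _
        _ ≤ ε := hqclose
    have h2 : ∑ x ∈ S.filter (fun x => ¬ q x = 0), p x ≤ ε := by
      have hcard : (S.filter (fun x => ¬ q x = 0)).card ≤ t := by
        refine le_trans (Finset.card_le_card ?_) hqcard
        intro x hx
        simp only [Finset.mem_filter] at hx ⊢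
        exact ⟨Finset.mem_univ x, hx.2⟩
      calc ∑ x ∈ S.filter (fun x => ¬ q x = 0), p x
          ≤ ∑ x ∈ S.filter (fun x => ¬ q x = 0), (ε / t) := by
            apply Finset.sum_le_sum
            intro x hx
            exact hpS x (Finset.mem_filter.mp hx).1
        _ = ((S.filter (fun x => ¬ q x = 0)).card : ℝ) * (ε / t) := by
            rw [Finset.sum_const, nsmul_eq_mul]
        _ ≤ (t : ℝ) * (ε / t) := by
            apply mul_le_mul_of_nonneg_right _ hεt
            exact_mod_cast hcard
        _ = ε := by field_simp
    linarith [hfe, h1, h2]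
  -- |∑_L (p - ptilde)| ≤ ε
  have hLdiff : |∑ x ∈ L, (p x - ptilde x)| ≤ ε := by
    calc |∑ x ∈ L, (p x - ptilde x)| ≤ ∑ x ∈ L, |p x - ptilde x| :=
          Finset.abs_sum_le_sum_abs _ _
      _ = ∑ x ∈ L, |ptilde x - p x| := by
          apply Finset.sum_congr rfl; intro x _; rw [abs_sub_comm]
      _ ≤ ε := hin
  -- the flat value
  set c : ℝ := (1 - ∑ y ∈ L, ptilde y) / (S.card : ℝ) with hcdef
  have hnc : (S.card : ℝ) * c = 1 - ∑ y ∈ L, ptilde y := by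
    rw [hcdef]; field_simp
  have hkey : 1 - ∑ y ∈ L, ptilde y = ∑ x ∈ L, (p x - ptilde x) + ∑ x ∈ S, p x := by
    have := hsplit p
    rw [hp1] at this
    rw [Finset.sum_sub_distrib]
    linarith
  have hncabs : (S.card : ℝ) * |c| ≤ 3 * ε := by
    have : |(S.card : ℝ) * c| ≤ 3 * ε := by
      rw [hnc, hkey]
      have h0 : 0 ≤ ∑ x ∈ S, p x := Finset.sum_nonneg (fun x _ => hp0 x)
      have hb := abs_le.mp hLdiff
      rw [abs_le]
      exact ⟨by linarith [hb.1], by linarith [hb.2]⟩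
    rwa [abs_mul, abs_of_nonneg (by positivity : (0:ℝ) ≤ (S.card:ℝ))] at this
  -- sum over S
  have hSsum : ∑ x ∈ S, |ptilde x - p x| ≤ 5 * ε := by
    calc ∑ x ∈ S, |ptilde x - p x|
        ≤ ∑ x ∈ S, (|c| + p x) := by
          apply Finset.sum_le_sum
          intro x hx
          have hxL : x ∉ L := (Finset.mem_sdiff.mp hx).2
          rw [hout x hxL]
          calc |c - p x| ≤ |c| + |p x| := abs_sub _ _
            _ = |c| + p x := by rw [abs_of_nonneg (hp0 x)]
      _ = (S.card : ℝ) * |c| + ∑ x ∈ S, p x := by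
          rw [Finset.sum_add_distrib, Finset.sum_const, nsmul_eq_mul]
      _ ≤ 3 * ε + 2 * ε := add_le_add hncabs hSp
      _ = 5 * ε := by ring
  calc ∑ x, |ptilde x - p x|
      = ∑ x ∈ L, |ptilde x - p x| + ∑ x ∈ S, |ptilde x - p x| := hsplit _
    _ ≤ ε + 5 * ε := add_le_add hin hSsum
    _ = 6 * ε := by ring
end
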